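/- Let k be an algebraically closed field, let A and C be finite-dimensional k-vector spaces with dim A = a ≥ 1 and dim C = a + b − 2 where b ≥ 2, and let W ⊆ Hom_k(A, C) be a k-linear subspace with dim W = b. Then W contains a nonzero linear map A → C that is not injective. (Equivalently: the (b−1)-dimensional projective linear subspace of P(Hom(A,C)) determined by W meets the locus of maps of rank at most a − 1.) -/

import Mathlib

open Module MvPolynomial

private lemma aux_sum_rec (γ : ℕ → ℕ → ℕ) (i : ℕ)
    (hrec : ∀ t, γ i (t+1) ≤ γ (i+1) (t+1) + γ i t) :
    ∀ t, γ i t ≤ γ i 0 + ∑ u ∈ Finset.Ioc 0 t, γ (i+1) u := by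
  intro t
  induction t with
  | zero => simp
  | succ t ih =>
    have h2 := hrec t
    have : ∑ u ∈ Finset.Ioc 0 (t+1), γ (i+1) u
        = ∑ u ∈ Finset.Ioc 0 t, γ (i+1) u + γ (i+1) (t+1) := by
      rw [Finset.sum_Ioc_succ_top (by omega)]
    omega

/-- The numeric chain lemma. -/
private lemma aux_chain (c T : ℕ) (hc : 1 ≤ c) (γ : ℕ → ℕ → ℕ)
    (hrec : ∀ i t, i < c → γ i (t+1) ≤ γ (i+1) (t+1) + γ i t)
    (hvan : ∀ t, T ≤ t → γ c t = 0) :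
    ∃ D, ∀ t, γ 0 t ≤ D * (t+1)^(c-1) := by
  have main : ∀ j, j ≤ c - 1 → ∃ D, ∀ t, γ (c-1-j) t ≤ D * (t+1)^j := by
    intro j
    induction j with
    | zero =>
      intro _
      refine ⟨γ (c-1) 0 + ∑ u ∈ Finset.Ioc 0 T, γ c u, fun t => ?_⟩
      have hcc : c - 1 + 1 = c := Nat.sub_add_cancel hc
      have h1 := aux_sum_rec γ (c-1) (fun t => by
        have := hrec (c-1) t (by omega)
        simpa [hcc] using this) t
      rw [hcc] at h1
      have h2 : ∑ u ∈ Finset.Ioc 0 t, γ c u ≤ ∑ u ∈ Finset.Ioc 0 T, γ c u := by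
        rcases le_total t T with h | h
        · exact Finset.sum_le_sum_of_subset (Finset.Ioc_subset_Ioc_right h)
        · have : ∑ u ∈ Finset.Ioc 0 T, γ c u + ∑ u ∈ Finset.Ioc T t, γ c u
              = ∑ u ∈ Finset.Ioc 0 t, γ c u :=
            Finset.sum_Ioc_consecutive _ (by omega) h
          have hz : ∑ u ∈ Finset.Ioc T t, γ c u = 0 :=
            Finset.sum_eq_zero (fun u hu => hvan u (by simp [Finset.mem_Ioc] at hu; omega))
          omega
      simpa using Nat.le_trans h1 (by omega)
    | succ j ih =>
      intro hj
      obtain ⟨D, hD⟩ := ih (by omega)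
      refine ⟨γ (c-1-(j+1)) 0 + D, fun t => ?_⟩
      have hi : c-1-(j+1)+1 = c-1-j := by omega
      have hlt : c-1-(j+1) < c := by omega
      have h1 := aux_sum_rec γ (c-1-(j+1)) (fun t => by
        have := hrec (c-1-(j+1)) t hlt; omega) t
      have h2 : ∑ u ∈ Finset.Ioc 0 t, γ (c-1-(j+1)+1) u ≤ t * (D * (t+1)^j) := by
        calc ∑ u ∈ Finset.Ioc 0 t, γ (c-1-(j+1)+1) u
            ≤ ∑ _u ∈ Finset.Ioc 0 t, D * (t+1)^j := by
              refine Finset.sum_le_sum (fun u hu => ?_)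
              rw [hi]
              refine (hD u).trans ?_
              have : (u+1)^j ≤ (t+1)^j := Nat.pow_le_pow_left (by simp [Finset.mem_Ioc] at hu; omega) j
              exact Nat.mul_le_mul_left D this
          _ = t * (D * (t+1)^j) := by simp [mul_comm]
      have h3 : γ (c-1-(j+1)) 0 + t * (D * (t+1)^j) ≤ (γ (c-1-(j+1)) 0 + D) * (t+1)^(j+1) := by
        have e1 : (γ (c-1-(j+1)) 0) * 1 ≤ γ (c-1-(j+1)) 0 * (t+1)^(j+1) :=
          Nat.mul_le_mul_left _ (Nat.one_le_pow _ _ (by omega))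
        have e2 : t * (D * (t+1)^j) ≤ D * (t+1)^(j+1) := by
          rw [pow_succ]
          calc t * (D * (t+1)^j) = D * ((t+1)^j * t) := by ring
            _ ≤ D * ((t+1)^j * (t+1)) :=
                Nat.mul_le_mul_left D (Nat.mul_le_mul_left _ (by omega))
        rw [Nat.add_mul]
        omega
      omega
  obtain ⟨D, hD⟩ := main (c-1) le_rfl
  exact ⟨D, by simpa using hD⟩


private lemma aux_finrank_map {k M M₂ : Type*} [Field k] [AddCommGroup M] [Module k M]
    [AddCommGroup M₂] [Module k M₂] (φ : M →ₗ[k] M₂) (N P : Submodule k M)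
    (hNP : N ≤ P) [FiniteDimensional k P] :
    finrank k (Submodule.map φ P) + finrank k N ≤
      finrank k (Submodule.map φ N) + finrank k P := by
  have instN : FiniteDimensional k N := Submodule.finiteDimensional_of_le hNP
  have h1 : finrank k (Submodule.map φ P) + finrank k (LinearMap.ker (φ.domRestrict P))
      = finrank k P := by
    rw [← LinearMap.range_domRestrict]
    exact LinearMap.finrank_range_add_finrank_ker (φ.domRestrict P)
  have h2 : finrank k (Submodule.map φ N) + finrank k (LinearMap.ker (φ.domRestrict N))
      = finrank k N := by
    rw [← LinearMap.range_domRestrict]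
    exact LinearMap.finrank_range_add_finrank_ker (φ.domRestrict N)
  have h3 : finrank k (LinearMap.ker (φ.domRestrict N))
      ≤ finrank k (LinearMap.ker (φ.domRestrict P)) := by
    have hmem : ∀ x ∈ LinearMap.ker (φ.domRestrict N),
        Submodule.inclusion hNP x ∈ LinearMap.ker (φ.domRestrict P) := by
      intro x hx
      simp only [LinearMap.mem_ker, LinearMap.domRestrict_apply] at hx ⊢
      simpa [Submodule.coe_inclusion] using hx
    have hinj : Function.Injective
        ((Submodule.inclusion hNP).restrict hmem) := by
      intro x y hxy
      have := congrArg Subtype.val hxy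
      simp only [LinearMap.restrict_apply] at this
      have h2 := congrArg Subtype.val this
      exact Subtype.ext (Subtype.ext (by simpa [Submodule.coe_inclusion] using h2))
    exact LinearMap.finrank_le_finrank_of_injective hinj
  omega


section Graded
variable {k : Type*} [Field k] {σ : Type*} [Fintype σ] (w : σ → ℕ × ℕ)

private lemma aux_degree_eq (hw : ∀ s, (w s).1 + (w s).2 = 1) (d : σ →₀ ℕ) :
    Finsupp.degree d = (Finsupp.weight w d).1 + (Finsupp.weight w d).2 := by
  rw [Finsupp.weight_apply, Finsupp.degree, Finsupp.sum,
    Prod.fst_sum, Prod.snd_sum, ← Finset.sum_add_distrib]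
  refine Finset.sum_congr rfl (fun s _ => ?_)
  have h1 : (d s) • w s = (d s * (w s).1, d s * (w s).2) := by
    simp [Prod.ext_iff, nsmul_eq_mul]
  rw [h1]
  simp only []
  rw [← Nat.mul_add, hw s, mul_one]

private lemma aux_S_finite (hw : ∀ s, (w s).1 + (w s).2 = 1) (mn : ℕ × ℕ) :
    {d : σ →₀ ℕ | Finsupp.weight w d = mn}.Finite := by
  refine (Finsupp.finite_of_degree_le (mn.1 + mn.2)).subset ?_
  intro d hd
  simp only [Set.mem_setOf_eq] at hd ⊢
  rw [aux_degree_eq w hw d, hd]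

private lemma aux_Pg_eq_span (mn : ℕ × ℕ) :
    weightedHomogeneousSubmodule k w mn =
      Submodule.span k ((fun d => (monomial d (1:k))) '' {d | Finsupp.weight w d = mn}) := by
  apply le_antisymm
  · intro p hp
    rw [mem_weightedHomogeneousSubmodule] at hp
    rw [p.as_sum]
    refine Submodule.sum_mem _ (fun d hd => ?_)
    have : monomial d (coeff d p) = (coeff d p) • monomial d (1:k) := by
      rw [smul_monomial, smul_eq_mul, mul_one]
    rw [this]
    refine Submodule.smul_mem _ _ (Submodule.subset_span ?_)
    exact ⟨d, hp (mem_support_iff.mp hd), rfl⟩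
  · rw [Submodule.span_le]
    rintro _ ⟨d, hd, rfl⟩
    rw [SetLike.mem_coe, mem_weightedHomogeneousSubmodule]
    exact isWeightedHomogeneous_monomial w d 1 hd

private lemma aux_Pg_fd (hw : ∀ s, (w s).1 + (w s).2 = 1) (mn : ℕ × ℕ) :
    FiniteDimensional k (weightedHomogeneousSubmodule k w mn) := by
  rw [aux_Pg_eq_span]
  exact FiniteDimensional.span_of_finite k ((aux_S_finite w hw mn).image _)

end Graded

private lemma aux_component_mul {k : Type*} [Field k] {σ : Type*} (w : σ → ℕ × ℕ)
    {f : MvPolynomial σ k} {m₀ : ℕ × ℕ} (hf : f ∈ weightedHomogeneousSubmodule k w m₀)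
    (g : MvPolynomial σ k) (n : ℕ × ℕ) :
    weightedHomogeneousComponent w (n + m₀) (g * f) =
      (weightedHomogeneousComponent w n g) * f := by
  classical
  induction g using MvPolynomial.induction_on' with
  | monomial u r =>
    have hg : (monomial u r : MvPolynomial σ k) ∈
        weightedHomogeneousSubmodule k w (Finsupp.weight w u) :=
      isWeightedHomogeneous_monomial w u r rfl
    have hgf : (monomial u r : MvPolynomial σ k) * f ∈
        weightedHomogeneousSubmodule k w (Finsupp.weight w u + m₀) :=
      weightedHomogeneousSubmodule_mul w _ _ (Submodule.mul_mem_mul hg hf)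
    rw [weightedHomogeneousComponent_of_mem hgf, weightedHomogeneousComponent_of_mem hg]
    by_cases h : n = Finsupp.weight w u
    · rw [if_pos (by rw [h]), if_pos h]
    · rw [if_neg (fun hc => h (by exact add_right_cancel hc)), if_neg h, zero_mul]
  | add p q hp hq =>
    rw [add_mul, map_add, map_add, hp, hq, add_mul]

/-- weight function for the bigrading -/
private def auxwt (b a : ℕ) : Fin b ⊕ Fin a → ℕ × ℕ := Sum.elim (fun _ => (1,0)) (fun _ => (0,1))

private lemma auxwt_sum (b a : ℕ) (s : Fin b ⊕ Fin a) :
    ((auxwt b a s).1 + (auxwt b a s).2 = 1) := by cases s <;> rfl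

private lemma auxwt_fst (b a : ℕ) (d : (Fin b ⊕ Fin a) →₀ ℕ) :
    (Finsupp.weight (auxwt b a) d).1 = ∑ i : Fin b, d (Sum.inl i) := by
  rw [Finsupp.weight_apply, Finsupp.sum_fintype _ _ (fun s => by simp)]
  rw [Prod.fst_sum, Fintype.sum_sum_type]
  simp [auxwt, nsmul_eq_mul]

private lemma auxwt_snd (b a : ℕ) (d : (Fin b ⊕ Fin a) →₀ ℕ) :
    (Finsupp.weight (auxwt b a) d).2 = ∑ j : Fin a, d (Sum.inr j) := by
  rw [Finsupp.weight_apply, Finsupp.sum_fintype _ _ (fun s => by simp)]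
  rw [Prod.snd_sum, Fintype.sum_sum_type]
  simp [auxwt, nsmul_eq_mul]

section JJ
variable {k : Type*} [Field k] {σ : Type*}

private noncomputable def auxPg' (k : Type*) [Field k] {σ : Type*} (w : σ → ℕ × ℕ) : ℕ → Submodule k (MvPolynomial σ k)
  | 0 => ⊥
  | (s+1) => weightedHomogeneousSubmodule k w (s,s)

private noncomputable def auxJ (k : Type*) [Field k] {σ : Type*} (w : σ → ℕ × ℕ)
    (G : ℕ → MvPolynomial σ k) (i : ℕ) : ℕ → Submodule k (MvPolynomial σ k) :=
  Nat.rec (fun _ => ⊥)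
    (fun i' ih t => ih t ⊔ Submodule.map (LinearMap.mulLeft k (G i')) (auxPg' k w t)) i

private lemma auxJ_zero (w : σ → ℕ × ℕ) (G : ℕ → MvPolynomial σ k) (t : ℕ) :
    auxJ k w G 0 t = ⊥ := rfl

private lemma auxJ_succ (w : σ → ℕ × ℕ) (G : ℕ → MvPolynomial σ k) (i t : ℕ) :
    auxJ k w G (i+1) t
      = auxJ k w G i t ⊔ Submodule.map (LinearMap.mulLeft k (G i)) (auxPg' k w t) := rfl

variable (w : σ → ℕ × ℕ) (G : ℕ → MvPolynomial σ k)
  (hG : ∀ n, G n ∈ weightedHomogeneousSubmodule k w (1,1))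

private lemma aux_mul_Pg' {g : MvPolynomial σ k}
    (hg : g ∈ weightedHomogeneousSubmodule k w (1,1)) (t : ℕ) :
    Submodule.map (LinearMap.mulLeft k g) (auxPg' k w t) ≤
      weightedHomogeneousSubmodule k w (t,t) := by
  rintro _ ⟨p, hp, rfl⟩
  match t with
  | 0 => simp only [auxPg'] at hp; simp at hp; simp [hp]
  | (s+1) =>
    simp only [auxPg'] at hp
    have h2 := weightedHomogeneousSubmodule_mul (R := k) w (1,1) (s,s)
      (Submodule.mul_mem_mul hg hp)
    have h3 : ((1,1) : ℕ × ℕ) + (s,s) = (s+1,s+1) := by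
      simp [Prod.ext_iff]; omega
    rw [h3] at h2
    exact h2

private lemma aux_mul_Pg'_succ {g : MvPolynomial σ k}
    (hg : g ∈ weightedHomogeneousSubmodule k w (1,1)) (t : ℕ) :
    Submodule.map (LinearMap.mulLeft k g) (auxPg' k w t) ≤ auxPg' k w (t+1) :=
  aux_mul_Pg' w hg t

include hG

private lemma auxJ_le_Pg : ∀ i t, auxJ k w G i t ≤ weightedHomogeneousSubmodule k w (t,t) := by
  intro i
  induction i with
  | zero => intro t; rw [auxJ_zero]; exact bot_le
  | succ i ih =>
    intro t
    rw [auxJ_succ]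
    exact sup_le (ih t) (aux_mul_Pg' w (hG i) t)

omit hG in
private lemma auxJ_mono : ∀ i i' t, i ≤ i' → auxJ k w G i t ≤ auxJ k w G i' t := by
  intro i i' t h
  induction i' with
  | zero => simp [Nat.le_zero.mp h, le_refl]
  | succ i' ih =>
    rcases Nat.lt_or_ge i (i'+1) with h' | h'
    · rw [auxJ_succ]
      exact le_trans (ih (by omega)) le_sup_left
    · have : i = i' + 1 := by omega
      subst this; exact le_refl _

omit hG in
private lemma auxJ_map_le {g : MvPolynomial σ k}
    (hg : g ∈ weightedHomogeneousSubmodule k w (1,1)) :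
    ∀ j t, Submodule.map (LinearMap.mulLeft k g) (auxJ k w G j t) ≤ auxJ k w G j (t+1) := by
  intro j
  induction j with
  | zero => intro t; rw [auxJ_zero, auxJ_zero, Submodule.map_bot]
  | succ j ih =>
    intro t
    rw [auxJ_succ, auxJ_succ, Submodule.map_sup]
    refine sup_le (le_trans (ih t) le_sup_left) ?_
    have hcomm : (LinearMap.mulLeft k g).comp (LinearMap.mulLeft k (G j))
        = (LinearMap.mulLeft k (G j)).comp (LinearMap.mulLeft k g) := by
      ext p
      simp only [LinearMap.comp_apply, LinearMap.mulLeft_apply]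
      ring
    rw [← Submodule.map_comp, hcomm, Submodule.map_comp]
    refine le_trans ?_ le_sup_right
    exact Submodule.map_mono (aux_mul_Pg'_succ w hg t)

end JJ

section KEY
variable {k : Type*} [Field k] {σ : Type*} [Fintype σ]
  (w : σ → ℕ × ℕ) (hw : ∀ s, (w s).1 + (w s).2 = 1)
  (G : ℕ → MvPolynomial σ k) (hG : ∀ n, G n ∈ weightedHomogeneousSubmodule k w (1,1))

private lemma aux_finrank_mono {M : Type*} [AddCommGroup M] [Module k M]
    {p q : Submodule k M} (hpq : p ≤ q) [FiniteDimensional k q] :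
    finrank k p ≤ finrank k q :=
  LinearMap.finrank_le_finrank_of_injective (Submodule.inclusion_injective hpq)

include hw hG

private lemma auxJ_fd (i t : ℕ) : FiniteDimensional k (auxJ k w G i t) :=
  have := aux_Pg_fd (k := k) w hw (t,t)
  Submodule.finiteDimensional_of_le (auxJ_le_Pg w G hG i t)

private lemma auxJ_key (i s : ℕ) :
    finrank k (auxJ k w G (i+1) (s+1)) + finrank k (auxJ k w G i s) ≤
      finrank k (auxJ k w G i (s+1)) + finrank k (weightedHomogeneousSubmodule k w (s,s)) := by
  have fdP : ∀ mn, FiniteDimensional k (weightedHomogeneousSubmodule k w mn) :=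
    fun mn => aux_Pg_fd (k := k) w hw mn
  have fdJ : ∀ i t, FiniteDimensional k (auxJ k w G i t) := auxJ_fd w hw G hG
  set φ := LinearMap.mulLeft k (G i) with hφ
  set Y := Submodule.map φ (weightedHomogeneousSubmodule k w (s,s)) with hY
  set Y' := Submodule.map φ (auxJ k w G i s) with hY'
  have hYP : auxPg' k w (s+1) = weightedHomogeneousSubmodule k w (s,s) := rfl
  have hsup : auxJ k w G (i+1) (s+1) = auxJ k w G i (s+1) ⊔ Y := by
    rw [auxJ_succ, hYP]
  have hYle : Y ≤ weightedHomogeneousSubmodule k w (s+1,s+1) := by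
    rw [hY, ← hYP]; exact aux_mul_Pg' w (hG i) (s+1)
  have fdY : FiniteDimensional k Y := Submodule.finiteDimensional_of_le hYle
  have fdJ1 : FiniteDimensional k (auxJ k w G i (s+1)) := fdJ i (s+1)
  -- sup-inf formula
  have h1 : finrank k (auxJ k w G i (s+1) ⊔ Y : Submodule k _) +
      finrank k (auxJ k w G i (s+1) ⊓ Y : Submodule k _)
      = finrank k (auxJ k w G i (s+1)) + finrank k Y :=
    Submodule.finrank_sup_add_finrank_inf_eq _ _
  -- Y' inside the intersection
  have hY'le : Y' ≤ auxJ k w G i (s+1) ⊓ Y := by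
    refine le_inf ?_ ?_
    · rw [hY']; exact auxJ_map_le w G (hG i) i s
    · rw [hY', hY]; exact Submodule.map_mono (auxJ_le_Pg w G hG i s)
  have fdInf : FiniteDimensional k (auxJ k w G i (s+1) ⊓ Y : Submodule k _) :=
    Submodule.finiteDimensional_of_le (le_trans inf_le_left (auxJ_le_Pg w G hG i (s+1)))
  have h2 : finrank k Y' ≤ finrank k (auxJ k w G i (s+1) ⊓ Y : Submodule k _) :=
    aux_finrank_mono hY'le
  -- the map inequality
  have h3 : finrank k Y + finrank k (auxJ k w G i s) ≤
      finrank k Y' + finrank k (weightedHomogeneousSubmodule k w (s,s)) := by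
    have := fdP (s,s)
    exact aux_finrank_map φ (auxJ k w G i s) (weightedHomogeneousSubmodule k w (s,s))
      (auxJ_le_Pg w G hG i s)
  rw [hsup]
  omega

private lemma aux_gamma_rec (i s : ℕ) :
    finrank k (weightedHomogeneousSubmodule k w (s+1,s+1)) - finrank k (auxJ k w G i (s+1))
    ≤ (finrank k (weightedHomogeneousSubmodule k w (s+1,s+1))
        - finrank k (auxJ k w G (i+1) (s+1)))
      + (finrank k (weightedHomogeneousSubmodule k w (s,s)) - finrank k (auxJ k w G i s)) := by
  have fdP : ∀ mn, FiniteDimensional k (weightedHomogeneousSubmodule k w mn) :=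
    fun mn => aux_Pg_fd (k := k) w hw mn
  have key := auxJ_key w hw G hG i s
  have m1 : finrank k (auxJ k w G i (s+1)) ≤ finrank k (auxJ k w G (i+1) (s+1)) := by
    have := fdP ((s+1),(s+1))
    have fd1 : FiniteDimensional k (auxJ k w G (i+1) (s+1)) := auxJ_fd w hw G hG (i+1) (s+1)
    exact aux_finrank_mono (auxJ_mono w G i (i+1) (s+1) (by omega))
  have m2 : finrank k (auxJ k w G (i+1) (s+1)) ≤
      finrank k (weightedHomogeneousSubmodule k w (s+1,s+1)) := by
    have := fdP ((s+1),(s+1))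
    exact aux_finrank_mono (auxJ_le_Pg w G hG (i+1) (s+1))
  have m3 : finrank k (auxJ k w G i s) ≤ finrank k (weightedHomogeneousSubmodule k w (s,s)) := by
    have := fdP (s,s)
    exact aux_finrank_mono (auxJ_le_Pg w G hG i s)
  omega

end KEY

private lemma aux_sum_fill (m t : ℕ) (f : Fin m → ℕ) (hle : ∑ i, f i ≤ t) :
    ∑ i : Fin (m+1), (if h : (i:ℕ) < m then f ⟨i,h⟩ else t - ∑ i', f i') = t := by
  rw [Fin.sum_univ_castSucc]
  have h1 : ∀ i : Fin m, (if h : ((Fin.castSucc i : Fin (m+1)):ℕ) < m then f ⟨(Fin.castSucc i : Fin (m+1)),h⟩ else t - ∑ i', f i') = f i := by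
    intro i
    rw [dif_pos (by simpa using i.2)]
    exact congrArg f (Fin.ext (by simp))
  rw [Finset.sum_congr rfl (fun i _ => h1 i)]
  rw [dif_neg (by simp)]
  have h2 : Finset.univ.sum f = ∑ i : Fin m, f i := rfl
  omega

private lemma aux_count (k : Type*) [Field k] (mb ma t : ℕ) :
    (t/mb+1)^mb * (t/ma+1)^ma ≤
      finrank k (weightedHomogeneousSubmodule k (auxwt (mb+1) (ma+1)) (t,t)) := by
  classical
  set b := mb + 1
  set a := ma + 1
  -- the index type
  set ι := ((Fin mb → Fin (t/mb+1)) × (Fin ma → Fin (t/ma+1))) with hι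
  -- the exponent function
  have hsumb : ∀ α : Fin mb → Fin (t/mb+1), (∑ i, ((α i):ℕ)) ≤ t := by
    intro α
    calc ∑ i, ((α i):ℕ) ≤ ∑ _i : Fin mb, t/mb :=
          Finset.sum_le_sum (fun i _ => by omega)
      _ = mb * (t/mb) := by simp [mul_comm]
      _ ≤ t := Nat.mul_div_le t mb
  have hsuma : ∀ β : Fin ma → Fin (t/ma+1), (∑ j, ((β j):ℕ)) ≤ t := by
    intro β
    calc ∑ j, ((β j):ℕ) ≤ ∑ _j : Fin ma, t/ma :=
          Finset.sum_le_sum (fun j _ => by omega)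
      _ = ma * (t/ma) := by simp [mul_comm]
      _ ≤ t := Nat.mul_div_le t ma
  set dfun : ι → ((Fin b ⊕ Fin a) → ℕ) := fun p => Sum.elim
      (fun i => if h : (i:ℕ) < mb then ((p.1 ⟨i,h⟩):ℕ) else t - ∑ i', ((p.1 i'):ℕ))
      (fun j => if h : (j:ℕ) < ma then ((p.2 ⟨j,h⟩):ℕ) else t - ∑ j', ((p.2 j'):ℕ)) with hdfun
  set dd : ι → ((Fin b ⊕ Fin a) →₀ ℕ) := fun p => Finsupp.equivFunOnFinite.symm (dfun p) with hdd
  have happ : ∀ p s, dd p s = dfun p s := by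
    intro p s; simp [hdd, Finsupp.equivFunOnFinite]
  have hweight : ∀ p, Finsupp.weight (auxwt b a) (dd p) = (t,t) := by
    intro p
    have h1 : (Finsupp.weight (auxwt b a) (dd p)).1 = t := by
      rw [auxwt_fst]
      have : ∀ i : Fin b, dd p (Sum.inl i)
          = (if h : (i:ℕ) < mb then ((p.1 ⟨i,h⟩):ℕ) else t - ∑ i', ((p.1 i'):ℕ)) := by
        intro i; rw [happ]; simp only [hdfun, Sum.elim_inl]
      rw [Finset.sum_congr rfl (fun i _ => this i)]
      exact aux_sum_fill mb t _ (hsumb p.1)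
    have h2 : (Finsupp.weight (auxwt b a) (dd p)).2 = t := by
      rw [auxwt_snd]
      have : ∀ j : Fin a, dd p (Sum.inr j)
          = (if h : (j:ℕ) < ma then ((p.2 ⟨j,h⟩):ℕ) else t - ∑ j', ((p.2 j'):ℕ)) := by
        intro j; rw [happ]; simp only [hdfun, Sum.elim_inr]
      rw [Finset.sum_congr rfl (fun j _ => this j)]
      exact aux_sum_fill ma t _ (hsuma p.2)
    exact Prod.ext h1 h2
  have hinj : Function.Injective dd := by
    intro p q hpq
    have hval : ∀ s, dfun p s = dfun q s := by
      intro s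
      rw [← happ, ← happ, hpq]
    refine Prod.ext ?_ ?_
    · funext i
      have := hval (Sum.inl ⟨i.1, by omega⟩)
      simp only [hdfun, Sum.elim_inl] at this
      rw [dif_pos (by exact i.2), dif_pos (by exact i.2)] at this
      exact Fin.val_injective (by simpa using this)
    · funext j
      have := hval (Sum.inr ⟨j.1, by omega⟩)
      simp only [hdfun, Sum.elim_inr] at this
      rw [dif_pos (by exact j.2), dif_pos (by exact j.2)] at this
      exact Fin.val_injective (by simpa using this)
  -- the monomial family inside the graded piece
  have hmem : ∀ p : ι, (monomial (dd p) (1:k)) ∈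
      weightedHomogeneousSubmodule k (auxwt b a) (t,t) := by
    intro p
    rw [mem_weightedHomogeneousSubmodule]
    exact isWeightedHomogeneous_monomial _ _ _ (hweight p)
  set fam : ι → (weightedHomogeneousSubmodule k (auxwt b a) (t,t)) :=
    fun p => ⟨monomial (dd p) (1:k), hmem p⟩ with hfam
  have hli : LinearIndependent k fam := by
    have h0 : LinearIndependent k (fun p : ι => monomial (dd p) (1:k)) := by
      have := (basisMonomials (Fin b ⊕ Fin a) k).linearIndependent
      have h2 := this.comp dd hinj
      rw [coe_basisMonomials] at h2
      exact h2
    exact h0.of_comp (weightedHomogeneousSubmodule k (auxwt b a) (t,t)).subtype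
  haveI : FiniteDimensional k (weightedHomogeneousSubmodule k (auxwt b a) (t,t)) :=
    aux_Pg_fd _ (auxwt_sum b a) _
  have hcard := hli.fintype_card_le_finrank
  simpa [hι, Fintype.card_prod, Fintype.card_fun] using hcard
section MAIN
set_option maxHeartbeats 8000000 in
/-- Let `k` be an algebraically closed field, `A` and `C` finite-dimensional `k`-vector
spaces with `dim A = a ≥ 1` and `dim C = a + b - 2` where `b ≥ 2`, and let
`W ⊆ Hom_k(A, C)` be a `k`-linear subspace with `dim W = b`. Then `W` contains a nonzero
linear map `A → C` that is not injective. -/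
theorem linear_subspace_meets_noninjective_locus {k A C : Type*} [Field k] [IsAlgClosed k]
    [AddCommGroup A] [Module k A] [AddCommGroup C] [Module k C]
    [FiniteDimensional k A] [FiniteDimensional k C]
    (a b : ℕ) (ha1 : 1 ≤ a) (hb2 : 2 ≤ b)
    (ha : Module.finrank k A = a) (hc : Module.finrank k C = a + b - 2)
    (W : Submodule k (A →ₗ[k] C)) (hW : Module.finrank k ↥W = b) :
    ∃ f : A →ₗ[k] C, f ∈ W ∧ f ≠ 0 ∧ ¬ Function.Injective f := by
  classical
  by_contra hcon
  push_neg at hcon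
  obtain ⟨mb, rfl⟩ : ∃ m, b = m + 1 := ⟨b - 1, by omega⟩
  obtain ⟨ma, rfl⟩ : ∃ m, a = m + 1 := ⟨a - 1, by omega⟩
  set b := mb + 1
  set a := ma + 1
  set c := a + b - 2 with hcdef
  have hc1 : 1 ≤ c := by omega
  -- bases
  let wB : Basis (Fin b) k ↥W := Module.finBasisOfFinrankEq k ↥W hW
  let vB : Basis (Fin a) k A := Module.finBasisOfFinrankEq k A ha
  let cB : Basis (Fin c) k C := Module.finBasisOfFinrankEq k C hc
  set wt := auxwt b a with hwt
  -- the defining polynomials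
  set F : Fin c → MvPolynomial (Fin b ⊕ Fin a) k := fun l =>
    ∑ i : Fin b, ∑ j : Fin a,
      (MvPolynomial.C ((cB.repr (((wB i : ↥W) : A →ₗ[k] C) (vB j))) l))
        * (X (Sum.inl i) * X (Sum.inr j)) with hF
  -- terms as monomials
  have hterm : ∀ (i : Fin b) (j : Fin a) (r : k),
      (MvPolynomial.C r) * (X (Sum.inl i) * X (Sum.inr j) : MvPolynomial (Fin b ⊕ Fin a) k)
        = monomial (Finsupp.single (Sum.inl i) 1 + Finsupp.single (Sum.inr j) 1) r := by
    intro i j r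
    rw [X, X, monomial_mul, one_mul, C_mul_monomial, mul_one]
  have hsingleweight : ∀ (i : Fin b) (j : Fin a),
      Finsupp.weight wt (Finsupp.single (Sum.inl i) 1 + Finsupp.single (Sum.inr j) 1)
        = ((1,1) : ℕ × ℕ) := by
    intro i j
    refine Prod.ext ?_ ?_
    · rw [auxwt_fst]
      simp [Finsupp.single_apply, Finset.sum_ite_eq]
    · rw [auxwt_snd]
      simp [Finsupp.single_apply, Finset.sum_ite_eq]
  have hFhom : ∀ l, F l ∈ weightedHomogeneousSubmodule k wt (1,1) := by
    intro l
    refine Submodule.sum_mem _ (fun i _ => Submodule.sum_mem _ (fun j _ => ?_))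
    rw [hterm]
    exact isWeightedHomogeneous_monomial _ _ _ (hsingleweight i j)
  -- evaluation
  set wsum : ((Fin b ⊕ Fin a) → k) → ↥W := fun x => ∑ i, x (Sum.inl i) • wB i with hwsum
  set vsum : ((Fin b ⊕ Fin a) → k) → A := fun x => ∑ j, x (Sum.inr j) • vB j with hvsum
  have hEV : ∀ (x : (Fin b ⊕ Fin a) → k) (l : Fin c),
      eval x (F l) = (cB.repr (((wsum x : ↥W) : A →ₗ[k] C) (vsum x))) l := by
    intro x l
    have hws : ((wsum x : ↥W) : A →ₗ[k] C) (vsum x)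
        = ∑ i, ∑ j, (x (Sum.inl i) * x (Sum.inr j)) •
            (((wB i : ↥W) : A →ₗ[k] C) (vB j)) := by
      rw [hwsum]
      simp only [Submodule.coe_sum, Submodule.coe_smul, LinearMap.coe_sum,
        Finset.sum_apply, LinearMap.smul_apply]
      refine Finset.sum_congr rfl (fun i _ => ?_)
      rw [hvsum]
      simp only [map_sum, map_smul, Finset.smul_sum]
      refine Finset.sum_congr rfl (fun j _ => ?_)
      rw [smul_smul]
    rw [hws, hF]
    simp only [map_sum, Finsupp.coe_finset_sum, Finset.sum_apply, map_smul,
      Finsupp.coe_smul, Pi.smul_apply, eval_mul, eval_C, eval_X, smul_eq_mul]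
    refine Finset.sum_congr rfl (fun i _ => Finset.sum_congr rfl (fun j _ => ?_))
    ring
  -- the ideal and the zero locus
  set I : Ideal (MvPolynomial (Fin b ⊕ Fin a) k) := Ideal.span (Set.range F) with hI
  have hzero : ∀ x ∈ zeroLocus k I,
      (∀ i, x (Sum.inl i) = 0) ∨ (∀ j, x (Sum.inr j) = 0) := by
    intro x hx
    have hev0 : ∀ l, eval x (F l) = 0 :=
      fun l => hx (F l) (Ideal.subset_span ⟨l, rfl⟩)
    have hrepr : cB.repr (((wsum x : ↥W) : A →ₗ[k] C) (vsum x)) = 0 := by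
      ext l
      rw [← hEV x l]
      exact hev0 l
    have hzeroelt : ((wsum x : ↥W) : A →ₗ[k] C) (vsum x) = 0 := by
      have := (LinearEquiv.map_eq_zero_iff cB.repr).mp hrepr
      exact this
    by_cases hw0 : wsum x = 0
    · left
      have := Fintype.linearIndependent_iff.mp wB.linearIndependent
        (fun i => x (Sum.inl i)) (by rw [← hwsum] at *; exact hw0)
      exact this
    · right
      have hfW : ((wsum x : ↥W) : A →ₗ[k] C) ∈ W := (wsum x).2
      have hfne : ((wsum x : ↥W) : A →ₗ[k] C) ≠ 0 := by
        intro h0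
        exact hw0 (Subtype.ext h0)
      have hinj := hcon _ hfW hfne
      have hv0 : vsum x = 0 := by
        apply hinj
        rw [hzeroelt, map_zero]
      have := Fintype.linearIndependent_iff.mp vB.linearIndependent
        (fun j => x (Sum.inr j)) (by rw [← hvsum] at *; exact hv0)
      exact this
  -- Nullstellensatz
  have hrad : ∀ (i : Fin b) (j : Fin a), ∃ n,
      ((X (Sum.inl i) * X (Sum.inr j) : MvPolynomial (Fin b ⊕ Fin a) k))^n ∈ I := by
    intro i j
    have hvan : (X (Sum.inl i) * X (Sum.inr j) : MvPolynomial (Fin b ⊕ Fin a) k)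
        ∈ vanishingIdeal k (zeroLocus k I) := by
      intro x hx
      rcases hzero x hx with h | h
      · simp [h i]
      · simp [h j]
    rw [vanishingIdeal_zeroLocus_eq_radical] at hvan
    exact hvan
  set Nf : Fin b × Fin a → ℕ := fun p => Classical.choose (hrad p.1 p.2) with hNf
  set N : ℕ := (Finset.univ.sup Nf) + 1 with hN
  have hNmem : ∀ (i : Fin b) (j : Fin a),
      ((X (Sum.inl i) * X (Sum.inr j) : MvPolynomial (Fin b ⊕ Fin a) k))^N ∈ I := by
    intro i j
    have h1 := Classical.choose_spec (hrad i j)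
    have h2 : Nf (i,j) ≤ N := by
      rw [hN]
      exact le_trans (Finset.le_sup (Finset.mem_univ (i,j))) (by omega)
    have : ((X (Sum.inl i) * X (Sum.inr j) : MvPolynomial (Fin b ⊕ Fin a) k))^N
        = ((X (Sum.inl i) * X (Sum.inr j)))^(Nf (i,j))
          * ((X (Sum.inl i) * X (Sum.inr j)))^(N - Nf (i,j)) := by
      rw [← pow_add]
      congr 1
      omega
    rw [this]
    exact Ideal.mul_mem_right _ _ h1

  -- the filtration
  set G : ℕ → MvPolynomial (Fin b ⊕ Fin a) k := fun n => if h : n < c then F ⟨n, h⟩ else 0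
    with hG
  have hGhom : ∀ n, G n ∈ weightedHomogeneousSubmodule k wt (1,1) := by
    intro n
    by_cases h : n < c
    · have hGn : G n = F ⟨n, h⟩ := by rw [hG]; simp [h]
      rw [hGn]; exact hFhom _
    · have hGn : G n = 0 := by rw [hG]; simp [h]
      rw [hGn]; exact Submodule.zero_mem _
  have hJF : ∀ (l : Fin c) (t : ℕ),
      Submodule.map (LinearMap.mulLeft k (F l)) (auxPg' k wt t) ≤ auxJ k wt G c t := by
    intro l t
    have h1 : G l.1 = F l := by rw [hG]; simp [l.2]
    have h2 : Submodule.map (LinearMap.mulLeft k (G l.1)) (auxPg' k wt t)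
        ≤ auxJ k wt G (l.1+1) t := by
      rw [auxJ_succ]
      exact le_sup_right
    rw [h1] at h2
    exact le_trans h2 (auxJ_mono wt G (l.1+1) c t l.2)
  -- vanishing in high degrees
  set T : ℕ := (a+b) * N + 1 with hT
  have hvanish : ∀ s : ℕ, T ≤ s + 1 →
      weightedHomogeneousSubmodule k wt (s+1,s+1) ≤ auxJ k wt G c (s+1) := by
    intro s hs
    rw [aux_Pg_eq_span, Submodule.span_le]
    rintro _ ⟨d, hd, rfl⟩
    rw [Set.mem_setOf_eq] at hd
    rw [SetLike.mem_coe]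
    -- pigeonhole for the b side
    have hsumb : ∑ i : Fin b, d (Sum.inl i) = s + 1 := by
      have := auxwt_fst b a d
      rw [hd] at this
      exact this.symm
    have hsuma : ∑ j : Fin a, d (Sum.inr j) = s + 1 := by
      have := auxwt_snd b a d
      rw [hd] at this
      exact this.symm
    have hpi : ∃ i : Fin b, N ≤ d (Sum.inl i) := by
      by_contra hno
      push_neg at hno
      have : ∑ i : Fin b, d (Sum.inl i) ≤ ∑ _i : Fin b, (N-1) :=
        Finset.sum_le_sum (fun i _ => by have := hno i; omega)
      simp only [Finset.sum_const, Finset.card_univ, Fintype.card_fin, smul_eq_mul] at this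
      rw [hsumb] at this
      have hmul : b * (N-1) ≤ (a+b) * N := Nat.mul_le_mul (by omega) (by omega)
      have hTle : T ≤ s + 1 := hs
      rw [hT] at hTle
      linarith
    have hpj : ∃ j : Fin a, N ≤ d (Sum.inr j) := by
      by_contra hno
      push_neg at hno
      have : ∑ j : Fin a, d (Sum.inr j) ≤ ∑ _j : Fin a, (N-1) :=
        Finset.sum_le_sum (fun j _ => by have := hno j; omega)
      simp only [Finset.sum_const, Finset.card_univ, Fintype.card_fin, smul_eq_mul] at this
      rw [hsuma] at this
      have hmul : a * (N-1) ≤ (a+b) * N := Nat.mul_le_mul (by omega) (by omega)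
      have hTle : T ≤ s + 1 := hs
      rw [hT] at hTle
      linarith
    obtain ⟨i, hi⟩ := hpi
    obtain ⟨j, hj⟩ := hpj
    set e : (Fin b ⊕ Fin a) →₀ ℕ :=
      Finsupp.single (Sum.inl i) N + Finsupp.single (Sum.inr j) N with he
    have hele : ∀ s', e s' ≤ d s' := by
      intro s'
      rcases s' with i' | j'
      · simp only [he, Finsupp.add_apply, Finsupp.single_apply]
        by_cases hii : (Sum.inl i : Fin b ⊕ Fin a) = Sum.inl i'
        · rw [if_pos hii, if_neg (by simp)]
          have : i = i' := by exact Sum.inl.inj hii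
          subst this
          omega
        · rw [if_neg hii, if_neg (by simp)]
          omega
      · simp only [he, Finsupp.add_apply, Finsupp.single_apply]
        by_cases hjj : (Sum.inr j : Fin b ⊕ Fin a) = Sum.inr j'
        · rw [if_neg (by simp), if_pos hjj]
          have : j = j' := by exact Sum.inr.inj hjj
          subst this
          omega
        · rw [if_neg (by simp), if_neg hjj]
          omega
    set d' : (Fin b ⊕ Fin a) →₀ ℕ := d - e with hd'
    have hdsplit : d = e + d' := by
      ext s'
      rw [hd']
      simp only [Finsupp.add_apply, Finsupp.tsub_apply]
      have := hele s'
      omega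
    -- monomial factorization
    have hXX : (X (Sum.inl i) * X (Sum.inr j) : MvPolynomial (Fin b ⊕ Fin a) k)
        = monomial (Finsupp.single (Sum.inl i) 1 + Finsupp.single (Sum.inr j) 1) (1:k) := by
      have := hterm i j 1
      rwa [map_one, one_mul] at this
    have hNe : N • (Finsupp.single (Sum.inl i) 1 + Finsupp.single (Sum.inr j) 1) = e := by
      rw [smul_add, Finsupp.smul_single, Finsupp.smul_single, he]
      simp
    have hmono : (monomial d (1:k))
        = ((X (Sum.inl i) * X (Sum.inr j))^N) * monomial d' 1 := by
      rw [hXX, monomial_pow, one_pow, monomial_mul, one_mul, hNe, ← hdsplit]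

    -- representation of the monomial in terms of the F's
    have hXXN := hNmem i j
    rw [hI] at hXXN
    obtain ⟨q, hq⟩ := (Ideal.mem_span_range_iff_exists_fun).mp hXXN
    have hrepr : (monomial d (1:k)) = ∑ l, (monomial d' 1 * q l) * F l := by
      rw [hmono, ← hq, Finset.sum_mul]
      refine Finset.sum_congr rfl (fun l _ => ?_)
      ring
    have hhomd : IsWeightedHomogeneous wt (monomial d (1:k)) (s+1,s+1) :=
      isWeightedHomogeneous_monomial _ _ _ hd
    have hcomp : (monomial d (1:k))
        = ∑ l, (weightedHomogeneousComponent wt (s,s) (monomial d' 1 * q l)) * F l := by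
      calc monomial d (1:k)
          = weightedHomogeneousComponent wt (s+1,s+1) (monomial d 1) :=
            (hhomd.weightedHomogeneousComponent_same).symm
        _ = ∑ l, weightedHomogeneousComponent wt (s+1,s+1) ((monomial d' 1 * q l) * F l) := by
            rw [← map_sum, ← hrepr]
        _ = ∑ l, (weightedHomogeneousComponent wt (s,s) (monomial d' 1 * q l)) * F l := by
            refine Finset.sum_congr rfl (fun l _ => ?_)
            have hcm := aux_component_mul wt (hFhom l) (monomial d' 1 * q l) (s,s)
            have heq : ((s,s) : ℕ×ℕ) + (1,1) = (s+1,s+1) := by simp [Prod.ext_iff]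
            rw [heq] at hcm
            exact hcm
    show monomial d (1:k) ∈ auxJ k wt G c (s+1)
    rw [hcomp]
    refine Submodule.sum_mem _ (fun l _ => ?_)
    have hmem1 : (weightedHomogeneousComponent wt (s,s) (monomial d' 1 * q l))
        ∈ auxPg' k wt (s+1) := weightedHomogeneousComponent_mem wt _ (s,s)
    apply hJF l (s+1)
    refine ⟨_, hmem1, ?_⟩
    rw [LinearMap.mulLeft_apply]
    exact mul_comm _ _

  -- the diagonal Hilbert function
  set γ : ℕ → ℕ → ℕ := fun i t =>
    finrank k (weightedHomogeneousSubmodule k wt (t,t)) - finrank k (auxJ k wt G i t) with hγ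
  have hwts : ∀ s, (wt s).1 + (wt s).2 = 1 := auxwt_sum b a
  have hrec : ∀ i t, i < c → γ i (t+1) ≤ γ (i+1) (t+1) + γ i t := by
    intro i t _
    exact aux_gamma_rec wt hwts G hGhom i t
  have hvan : ∀ t, T ≤ t → γ c t = 0 := by
    intro t ht
    match t, ht with
    | 0, ht => rw [hT] at ht; omega
    | (s+1), ht =>
      have h1 : auxJ k wt G c (s+1) = weightedHomogeneousSubmodule k wt (s+1,s+1) :=
        le_antisymm (auxJ_le_Pg wt G hGhom c (s+1)) (hvanish s ht)
      have h2 : finrank k (auxJ k wt G c (s+1))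
          = finrank k (weightedHomogeneousSubmodule k wt (s+1,s+1)) := by rw [h1]
      simp only [hγ]
      omega
  obtain ⟨D, hD⟩ := aux_chain c T hc1 γ hrec hvan
  have hγ0 : ∀ t, γ 0 t = finrank k (weightedHomogeneousSubmodule k wt (t,t)) := by
    intro t
    rw [hγ]
    have h0 : finrank k (auxJ k wt G 0 t) = 0 := by rw [auxJ_zero, _root_.finrank_bot]
    simp only [h0, Nat.sub_zero]
  -- the count lower bound
  have hcount : ∀ t, (t/mb+1)^mb * (t/ma+1)^ma
      ≤ finrank k (weightedHomogeneousSubmodule k wt (t,t)) := by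
    intro t
    exact aux_count k mb ma t
  -- power bounds
  have hpowb : ∀ t, t^mb ≤ mb^mb * (t/mb+1)^mb := by
    intro t
    rcases Nat.eq_zero_or_pos mb with h0 | hpos
    · subst h0; simp
    · have hmod : t % mb < mb := Nat.mod_lt _ hpos
      have hdm : mb * (t / mb) + t % mb = t := Nat.div_add_mod t mb
      have hmm : mb * (t/mb+1) = mb * (t/mb) + mb := by rw [Nat.mul_add, mul_one]
      have hle : t ≤ mb * (t/mb+1) := by linarith
      calc t^mb ≤ (mb * (t/mb+1))^mb := Nat.pow_le_pow_left hle mb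
        _ = mb^mb * (t/mb+1)^mb := by rw [mul_pow]
  have hpowa : ∀ t, t^ma ≤ ma^ma * (t/ma+1)^ma := by
    intro t
    rcases Nat.eq_zero_or_pos ma with h0 | hpos
    · subst h0; simp
    · have hmod : t % ma < ma := Nat.mod_lt _ hpos
      have hdm : ma * (t / ma) + t % ma = t := Nat.div_add_mod t ma
      have hmm : ma * (t/ma+1) = ma * (t/ma) + ma := by rw [Nat.mul_add, mul_one]
      have hle : t ≤ ma * (t/ma+1) := by linarith
      calc t^ma ≤ (ma * (t/ma+1))^ma := Nat.pow_le_pow_left hle ma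
        _ = ma^ma * (t/ma+1)^ma := by rw [mul_pow]
  have hce : c = mb + ma := by omega
  set X : ℕ := mb^mb * ma^ma * D with hX
  -- the global growth bound
  have hgrow : ∀ t, t^c ≤ X * (t+1)^(c-1) := by
    intro t
    calc t^c = t^mb * t^ma := by rw [hce, pow_add]
      _ ≤ (mb^mb * (t/mb+1)^mb) * (ma^ma * (t/ma+1)^ma) :=
          Nat.mul_le_mul (hpowb t) (hpowa t)
      _ = (mb^mb * ma^ma) * ((t/mb+1)^mb * (t/ma+1)^ma) := by ring
      _ ≤ (mb^mb * ma^ma) * finrank k (weightedHomogeneousSubmodule k wt (t,t)) :=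
          Nat.mul_le_mul_left _ (hcount t)
      _ = (mb^mb * ma^ma) * γ 0 t := by rw [hγ0]
      _ ≤ (mb^mb * ma^ma) * (D * (t+1)^(c-1)) := Nat.mul_le_mul_left _ (hD t)
      _ = X * (t+1)^(c-1) := by rw [hX]; ring
  -- choose t large to get a contradiction
  set t0 : ℕ := (X+1) * 2^c with ht0
  have ht0pos : 1 ≤ t0 := by
    rw [ht0]
    exact Nat.one_le_iff_ne_zero.mpr (by positivity)
  have hstep : t0^c ≤ (X * 2^(c-1)) * t0^(c-1) := by
    calc t0^c ≤ X * (t0+1)^(c-1) := hgrow t0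
      _ ≤ X * (2*t0)^(c-1) :=
          Nat.mul_le_mul_left _ (Nat.pow_le_pow_left (by omega) _)
      _ = (X * 2^(c-1)) * t0^(c-1) := by rw [mul_pow]; ring
  have hcancel : t0 ≤ X * 2^(c-1) := by
    have hpow : 0 < t0^(c-1) := Nat.pow_pos ht0pos
    have h1 : t0 * t0^(c-1) ≤ (X * 2^(c-1)) * t0^(c-1) := by
      have : t0^c = t0 * t0^(c-1) := by
        conv_lhs => rw [show c = (c-1)+1 by omega]
        rw [pow_succ]
        ring
      rw [← this]
      exact hstep
    exact Nat.le_of_mul_le_mul_right h1 hpow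
  have hfinal : X * 2^(c-1) < t0 := by
    have hp : 0 < 2^(c-1) := Nat.pow_pos (by omega)
    have h2c : (2:ℕ)^c = 2^(c-1) * 2 := by
      conv_lhs => rw [show c = (c-1)+1 by omega]
      rw [pow_succ]
    rw [ht0, h2c]
    have hexp : (X+1) * (2^(c-1) * 2) = X * 2^(c-1) + (X * 2^(c-1) + 2 * 2^(c-1)) := by ring
    rw [hexp]
    linarith
  omega


end MAIN
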